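/- arXiv:0708.3533 — 4 statements merged into one kernel-verified Lean document; each statement's English description precedes it below -/
import Mathlib

section
/- Let N ≥ 2 be an even integer, R > 1 a real number, and C_s > 0 a constant. Let ŝ : ℤ → ℂ satisfy |ŝ(m)| ≤ C_s·R^{−|m|} for all m ∈ ℤ. Then for every coefficient vector α̂ = (α̂_k)_{−N/2<k≤N/2} ∈ ℂ^N, the ℓ²-norm of the sequence (m ↦ (N/(2π))·ŝ(m)·α̂_{⟨m⟩_N}) over m ∈ ℤ is at most (C_s·N/(2π))·√((R²+1)/(R²−1))·|α̂|, where |α̂| := (∑_{−N/2<k≤N/2} |α̂_k|²)^{1/2}. (This is the bound ‖Q‖ ≤ (C_s N/(2π))·√((R²+1)/(R²−1)) on the operator Q mapping discrete MFS Fourier coefficients to boundary Fourier coefficients.) -/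
open scoped BigOperators

noncomputable section

/-- The unique representative of `m` modulo `N` lying in the window `(-N/2, N/2]`. -/
def winRep (N : ℕ) (m : ℤ) : ℤ := (m + (N : ℤ) / 2 - 1) % (N : ℤ) - ((N : ℤ) / 2 - 1)

/-- The index window `(-N/2, N/2]` as a finite set of integers. -/
def window (N : ℕ) : Finset ℤ := Finset.Icc (-(N : ℤ) / 2 + 1) ((N : ℤ) / 2)

/-- The norm `|α̂|` of a coefficient vector indexed by the window. -/
def coefNorm (N : ℕ) (a : ℤ → ℂ) : ℝ := Real.sqrt (∑ k ∈ window N, ‖a k‖ ^ 2)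

lemma geo_int_hasSum {r : ℝ} (h0 : 0 ≤ r) (h1 : r < 1) :
    HasSum (fun m : ℤ => r ^ |m|.toNat) ((1 + r) / (1 - r)) := by
  have hnat : HasSum (fun n : ℕ => r ^ n) (1 - r)⁻¹ := hasSum_geometric_of_lt_one h0 h1
  have hneg : HasSum (fun n : ℕ => r ^ (n + 1)) (r * (1 - r)⁻¹) := by
    simpa [pow_succ, mul_comm] using hnat.mul_left r
  have key : ∀ n : ℕ, |(-1 + -(n:ℤ))|.toNat = n + 1 := fun n => by
    rw [abs_of_nonpos (by omega)]; omega
  have := HasSum.of_nat_of_neg_add_one (f := fun m : ℤ => r ^ |m|.toNat)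
    (by simpa using hnat) (by simpa [key] using hneg)
  convert this using 1
  have h : (1:ℝ) - r ≠ 0 := by linarith
  field_simp

lemma winRep_mem (N : ℕ) (hN2 : 2 ≤ N) (hNeven : Even N) (m : ℤ) :
    winRep N m ∈ window N := by
  obtain ⟨t, ht⟩ := hNeven
  have ht' : (N : ℤ) = t + t := by exact_mod_cast ht
  have hNpos : (0:ℤ) < (N:ℤ) := by exact_mod_cast (by omega : 0 < N)
  have h1 := Int.emod_nonneg (m + (N:ℤ)/2 - 1) (by omega : (N:ℤ) ≠ 0)
  have h2 := Int.emod_lt_of_pos (m + (N:ℤ)/2 - 1) hNpos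
  simp only [window, winRep, Finset.mem_Icc]
  set x := (m + (N:ℤ)/2 - 1) % (N:ℤ) with hx
  omega

/-- Bound `‖Q‖ ≤ (C_s N/(2π))·√((R²+1)/(R²−1))` on the operator mapping discrete MFS
Fourier coefficients to boundary Fourier coefficients. -/
theorem mfs_Q_operator_bound
    (N : ℕ) (hNeven : Even N) (hN2 : 2 ≤ N)
    (R Cs : ℝ) (hR : 1 < R) (hCs : 0 < Cs)
    (s : ℤ → ℂ) (hs : ∀ m : ℤ, ‖s m‖ ≤ Cs * R ^ (-|m|))
    (a : ℤ → ℂ) :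
    Summable (fun m : ℤ => ‖((N : ℂ) / (2 * (Real.pi : ℂ))) * s m * a (winRep N m)‖ ^ 2) ∧
    Real.sqrt (∑' m : ℤ, ‖((N : ℂ) / (2 * (Real.pi : ℂ))) * s m * a (winRep N m)‖ ^ 2)
      ≤ (Cs * N / (2 * Real.pi)) * Real.sqrt ((R ^ 2 + 1) / (R ^ 2 - 1)) * coefNorm N a := by
  have hπ := Real.pi_pos
  have hR0 : (0:ℝ) < R := lt_trans one_pos hR
  have hR2 : (1:ℝ) < R ^ 2 := by nlinarith
  set c : ℝ := (N:ℝ) / (2 * Real.pi) with hcdef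
  set r : ℝ := (R ^ 2)⁻¹ with hrdef
  have hr0 : 0 ≤ r := by positivity
  have hr1 : r < 1 := by
    rw [hrdef, inv_lt_one_iff₀]; right; exact hR2
  set B : ℝ := ∑ k ∈ window N, ‖a k‖ ^ 2 with hBdef
  have hB0 : 0 ≤ B := Finset.sum_nonneg fun i _ => sq_nonneg _
  have hBle : ∀ m : ℤ, ‖a (winRep N m)‖ ^ 2 ≤ B := fun m =>
    Finset.single_le_sum (f := fun k => ‖a k‖ ^ 2) (fun i _ => sq_nonneg _)
      (winRep_mem N hN2 hNeven m)
  have hc0 : 0 ≤ c := by positivity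
  have hcnorm : ‖((N : ℂ) / (2 * (Real.pi : ℂ)))‖ = c := by
    rw [norm_div, norm_mul]
    simp [Complex.norm_natCast, Complex.norm_real, abs_of_nonneg Real.pi_pos.le, hcdef]
  have hpow : ∀ m : ℤ, (R ^ (-|m|)) ^ 2 = r ^ |m|.toNat := by
    intro m
    have hm : |m| = ((|m|.toNat : ℤ)) := (Int.toNat_of_nonneg (abs_nonneg m)).symm
    rw [hm, hrdef, zpow_neg, zpow_natCast, inv_pow, inv_pow, ← pow_mul, ← pow_mul,
      mul_comm |m|.toNat 2]
    simp
  have hterm : ∀ m : ℤ,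
      ‖((N : ℂ) / (2 * (Real.pi : ℂ))) * s m * a (winRep N m)‖ ^ 2
        ≤ (c ^ 2 * Cs ^ 2 * B) * r ^ |m|.toNat := by
    intro m
    rw [norm_mul, norm_mul, hcnorm, ← hpow m]
    have hsm := hs m
    have ht0 : (0:ℝ) ≤ R ^ (-|m|) := zpow_nonneg hR0.le _
    have h1 : ‖s m‖ ^ 2 ≤ (Cs * R ^ (-|m|)) ^ 2 :=
      pow_le_pow_left₀ (norm_nonneg _) hsm 2
    have h2 := hBle m
    have h3 : ‖s m‖ ^ 2 * ‖a (winRep N m)‖ ^ 2 ≤ (Cs * R ^ (-|m|)) ^ 2 * B :=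
      mul_le_mul h1 h2 (sq_nonneg _) (by positivity)
    nlinarith [sq_nonneg c, mul_le_mul_of_nonneg_left h3 (sq_nonneg c)]
  have hg : HasSum (fun m : ℤ => (c ^ 2 * Cs ^ 2 * B) * r ^ |m|.toNat)
      ((c ^ 2 * Cs ^ 2 * B) * ((1 + r) / (1 - r))) :=
    (geo_int_hasSum hr0 hr1).mul_left _
  have hsum : Summable (fun m : ℤ =>
      ‖((N : ℂ) / (2 * (Real.pi : ℂ))) * s m * a (winRep N m)‖ ^ 2) :=
    Summable.of_nonneg_of_le (fun m => sq_nonneg _) hterm hg.summable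
  refine ⟨hsum, ?_⟩
  have htsum : (∑' m : ℤ, ‖((N : ℂ) / (2 * (Real.pi : ℂ))) * s m * a (winRep N m)‖ ^ 2)
      ≤ (c ^ 2 * Cs ^ 2 * B) * ((1 + r) / (1 - r)) := by
    rw [← hg.tsum_eq]
    exact Summable.tsum_le_tsum hterm hsum hg.summable
  have hQ0 : (0:ℝ) ≤ (R ^ 2 + 1) / (R ^ 2 - 1) := by
    apply div_nonneg <;> nlinarith
  have hratio : (1 + r) / (1 - r) = (R ^ 2 + 1) / (R ^ 2 - 1) := by
    rw [hrdef]
    have hR2ne : R ^ 2 ≠ 0 := by positivity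
    have h21 : R ^ 2 - 1 ≠ 0 := by nlinarith
    field_simp
  have hRHS0 : 0 ≤ (Cs * N / (2 * Real.pi)) * Real.sqrt ((R ^ 2 + 1) / (R ^ 2 - 1)) *
      coefNorm N a := by
    apply mul_nonneg; apply mul_nonneg
    · positivity
    · exact Real.sqrt_nonneg _
    · exact Real.sqrt_nonneg _
  have hsq : ((Cs * N / (2 * Real.pi)) * Real.sqrt ((R ^ 2 + 1) / (R ^ 2 - 1)) *
      coefNorm N a) ^ 2 = (c ^ 2 * Cs ^ 2 * B) * ((1 + r) / (1 - r)) := by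
    rw [hratio, mul_pow, mul_pow, Real.sq_sqrt hQ0, coefNorm, Real.sq_sqrt hB0, hcdef]
    field_simp
  calc Real.sqrt (∑' m : ℤ, ‖((N : ℂ) / (2 * (Real.pi : ℂ))) * s m * a (winRep N m)‖ ^ 2)
      ≤ Real.sqrt ((c ^ 2 * Cs ^ 2 * B) * ((1 + r) / (1 - r))) := Real.sqrt_le_sqrt htsum
    _ = (Cs * N / (2 * Real.pi)) * Real.sqrt ((R ^ 2 + 1) / (R ^ 2 - 1)) * coefNorm N a := by
        rw [← hsq, Real.sqrt_sq hRHS0]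
end
end

section
/- Assume the MFS setup with eigenvalue bounds (H_s) and boundary-data decay |v̂(m)| ≤ C_v·ρ^{−|m|} for all m ∈ ℤ, where 1 < ρ < R². Then there exists a constant C > 0, depending on R, ρ, c_s, C_s, C_v (and on ŝ(0), v̂(0)) but not on N, such that for every even integer N ≥ 2 there exists a coefficient vector α̂ ∈ ℂ^N with boundary error t(α̂) ≤ C·ρ^{−N/2}. -/
open scoped BigOperators ENNReal NNReal

noncomputable section

/-- The boundary error norm
`t(α̂) = (2π·∑_{m∈ℤ} |(N/(2π))·ŝ(m)·α̂_{⟨m⟩_N} − v̂(m)|²)^{1/2}`, valued in `[0,∞]`. -/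
def tErr (N : ℕ) (s v a : ℤ → ℂ) : ℝ≥0∞ :=
  (ENNReal.ofReal (2 * Real.pi) *
    ∑' m : ℤ, (‖((N : ℂ) / (2 * (Real.pi : ℂ))) * s m * a (winRep N m) - v m‖₊ : ℝ≥0∞) ^ 2)
    ^ (1 / 2 : ℝ)

/-- Encoding of an integer `j` as a natural number, with `encJ j ≤ 2|j|`. -/
def encJ (j : ℤ) : ℕ := if 0 ≤ j then (2*j).toNat else (-2*j - 1).toNat

/-- Encoding of a window element `k` as a natural number, small when `|k|` is close to `M`. -/
def encK (M k : ℤ) : ℕ := if 1 ≤ k then (2*(M - k)).toNat else (2*(M + k) + 1).toNat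

lemma encJ_inj : Function.Injective encJ := by
  intro x y h
  unfold encJ at h
  split_ifs at h <;> omega

lemma encJ_le (j : ℤ) : (encJ j : ℤ) ≤ 2 * j.natAbs := by
  unfold encJ; split_ifs <;> omega

lemma encK_le {M k : ℤ} (h1 : -M + 1 ≤ k) (h2 : k ≤ M) :
    (encK M k : ℤ) ≤ 2 * (M - k.natAbs) + 1 := by
  unfold encK; split_ifs <;> omega

lemma encK_inj {M a b : ℤ} (ha1 : -M + 1 ≤ a) (ha2 : a ≤ M) (hb1 : -M + 1 ≤ b)
    (hb2 : b ≤ M) (h : encK M a = encK M b) : a = b := by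
  unfold encK at h
  split_ifs at h <;> omega

lemma winRep_facts {N : ℕ} {M : ℤ} (hM : (N : ℤ) = 2 * M) (hM1 : 1 ≤ M) (m : ℤ) :
    (-M + 1 ≤ winRep N m ∧ winRep N m ≤ M) ∧
      (N : ℤ) * ((m + M - 1) / (N : ℤ)) + winRep N m = m := by
  have hN0 : ((N : ℤ)) ≠ 0 := by omega
  have hdiv : (N : ℤ) / 2 = M := by omega
  have h1 := Int.emod_nonneg (m + M - 1) hN0
  have h2 := Int.emod_lt_of_pos (m + M - 1) (by omega : (0:ℤ) < (N : ℤ))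
  have h3 := Int.mul_ediv_add_emod (m + M - 1) (N : ℤ)
  unfold winRep
  rw [hdiv]
  omega

lemma window_mem_iff {N : ℕ} {M : ℤ} (hM : (N : ℤ) = 2 * M) (m : ℤ) :
    m ∈ window N ↔ (-M + 1 ≤ m ∧ m ≤ M) := by
  have hdiv : (-(N : ℤ)) / 2 = -M := by omega
  have hdiv2 : (N : ℤ) / 2 = M := by omega
  unfold window
  rw [Finset.mem_Icc]
  omega

lemma winRep_of_mem {N : ℕ} {M : ℤ} (hM : (N : ℤ) = 2 * M) (hM1 : 1 ≤ M) {m : ℤ}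
    (hm : m ∈ window N) : winRep N m = m := by
  obtain ⟨⟨hw1, hw2⟩, heq⟩ := winRep_facts hM hM1 m
  rw [window_mem_iff hM] at hm
  have hN : (N : ℤ) = 2 * M := hM
  set j := (m + M - 1) / (N : ℤ) with hj
  -- m - winRep = N * j, both in window, so j = 0
  rcases lt_trichotomy j 0 with h | h | h
  · have : (N : ℤ) * j ≤ (N : ℤ) * (-1) := by
      apply mul_le_mul_of_nonneg_left (by omega) (by omega)
    omega
  · rw [h, mul_zero, zero_add] at heq; exact heq
  · have : (N : ℤ) * 1 ≤ (N : ℤ) * j := by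
      apply mul_le_mul_of_nonneg_left (by omega) (by omega)
    omega


lemma core1 (R ρ σ : ℝ) (hR : 1 < R) (hρ : 1 < ρ) (hσ : 1 < σ)
    (hσq : σ ≤ R ^ 2 / ρ) (hσρ : σ ≤ ρ) (hσR : σ ≤ R)
    (Kr mr Jr Mr Nr : ℝ) (hK0 : 0 ≤ Kr) (hKM : Kr ≤ Mr) (hJ1 : 1 ≤ Jr)
    (hJN : Jr * Nr ≤ mr + Kr) (hNr : Nr = 2 * Mr) (hM1 : 1 ≤ Mr) :
    R ^ (Kr - mr) * ρ ^ (-Kr) ≤ ρ ^ (-Mr) * σ ^ (-((Mr - Kr) + (Jr - 1) * Nr)) := by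
  have hR0 : (0:ℝ) < R := by linarith
  have hρ0 : (0:ℝ) < ρ := by linarith
  have hσ0 : (0:ℝ) < σ := by linarith
  rw [← Real.log_le_log_iff (by positivity) (by positivity),
    Real.log_mul (by positivity) (by positivity),
    Real.log_mul (by positivity) (by positivity),
    Real.log_rpow hR0, Real.log_rpow hρ0, Real.log_rpow hρ0, Real.log_rpow hσ0]
  have hlR : 0 ≤ Real.log R := Real.log_nonneg hR.le
  have hlρ : 0 ≤ Real.log ρ := Real.log_nonneg hρ.le
  have hlσq : Real.log σ ≤ 2 * Real.log R - Real.log ρ := by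
    have h := Real.log_le_log hσ0 hσq
    rw [Real.log_div (by positivity) (by positivity), Real.log_pow] at h
    push_cast at h
    linarith
  have hlσρ : Real.log σ ≤ Real.log ρ := Real.log_le_log hσ0 hσρ
  have hlσR : Real.log σ ≤ Real.log R := Real.log_le_log hσ0 hσR
  subst hNr
  have h1 : (Mr - Kr) * Real.log σ ≤ (Mr - Kr) * (2 * Real.log R - Real.log ρ) :=
    mul_le_mul_of_nonneg_left hlσq (by linarith)
  have h2 : ((Jr - 1) * (2 * Mr)) * Real.log σ ≤ ((Jr - 1) * (2 * Mr)) * Real.log R :=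
    mul_le_mul_of_nonneg_left hlσR (by nlinarith)
  have h3 : (Jr * (2 * Mr)) * Real.log R ≤ (mr + Kr) * Real.log R :=
    mul_le_mul_of_nonneg_right hJN hlR
  nlinarith [h1, h2, h3]

lemma core2 (ρ σ : ℝ) (hρ : 1 < ρ) (hσ : 1 < σ) (hσρ : σ ≤ ρ)
    (Kr mr Jr Mr Nr : ℝ) (hK0 : 0 ≤ Kr) (hKM : Kr ≤ Mr) (hJ1 : 1 ≤ Jr)
    (hJN : Jr * Nr ≤ mr + Kr) (hNr : Nr = 2 * Mr) (hM1 : 1 ≤ Mr) :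
    ρ ^ (-mr) ≤ ρ ^ (-Mr) * σ ^ (-((Mr - Kr) + (Jr - 1) * Nr)) := by
  have hρ0 : (0:ℝ) < ρ := by linarith
  have hσ0 : (0:ℝ) < σ := by linarith
  rw [← Real.log_le_log_iff (by positivity) (by positivity),
    Real.log_mul (by positivity) (by positivity),
    Real.log_rpow hρ0, Real.log_rpow hρ0, Real.log_rpow hσ0]
  have hlρ : 0 ≤ Real.log ρ := Real.log_nonneg hρ.le
  have hlσρ : Real.log σ ≤ Real.log ρ := Real.log_le_log hσ0 hσρ
  subst hNr
  have hT0 : 0 ≤ (Mr - Kr) + (Jr - 1) * (2 * Mr) := by nlinarith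
  have h1 : ((Mr - Kr) + (Jr - 1) * (2 * Mr)) * Real.log σ ≤
      ((Mr - Kr) + (Jr - 1) * (2 * Mr)) * Real.log ρ :=
    mul_le_mul_of_nonneg_left hlσρ hT0
  have h2 : ((Mr - Kr) + (Jr - 1) * (2 * Mr)) * Real.log ρ ≤ (mr - Mr) * Real.log ρ :=
    mul_le_mul_of_nonneg_right (by linarith) hlρ
  nlinarith [h1, h2]


lemma ratio_bound (R ρ cs Cs Cv E s0n : ℝ) (hR : 1 < R) (hρ : 1 < ρ)
    (hcs : 0 < cs) (hCs : 0 < Cs) (hCv : 0 < Cv) (hs0n : 0 < s0n)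
    (hE1 : Cs / cs ≤ E) (hE2 : Cs / s0n ≤ E)
    (Kr mr : ℝ) (hK0 : 0 ≤ Kr) (hKm : Kr ≤ mr) (hmr1 : 1 ≤ mr)
    (sm vk sk : ℝ) (hsm0 : 0 ≤ sm) (hvk0 : 0 ≤ vk) (hsk0 : 0 < sk)
    (hsmu : sm ≤ Cs / mr * R ^ (-mr))
    (hvku : vk ≤ Cv * ρ ^ (-Kr))
    (hskl : (Kr = 0 ∧ s0n ≤ sk) ∨ (1 ≤ Kr ∧ cs / Kr * R ^ (-Kr) ≤ sk)) :
    sm * vk / sk ≤ E * Cv * (R ^ (Kr - mr) * ρ ^ (-Kr)) := by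
  have hR0 : (0:ℝ) < R := by linarith
  have hρ0 : (0:ℝ) < ρ := by linarith
  have hE0 : 0 < E := lt_of_lt_of_le (by positivity) hE1
  have hRm : (0:ℝ) < R ^ (-mr) := Real.rpow_pos_of_pos hR0 _
  have hρK : (0:ℝ) < ρ ^ (-Kr) := Real.rpow_pos_of_pos hρ0 _
  rw [div_le_iff₀ hsk0]
  rcases hskl with ⟨hKr0, hsk⟩ | ⟨hKr1, hsk⟩
  · subst hKr0
    simp only [zero_sub, Real.rpow_zero, neg_zero, mul_one]
    have h1 : sm ≤ Cs * R ^ (-mr) := by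
      refine hsmu.trans (mul_le_mul_of_nonneg_right ?_ hRm.le)
      rw [div_le_iff₀ (by linarith)]
      nlinarith
    have hvk1 : vk ≤ Cv := by simpa using hvku
    have hCsE : Cs ≤ E * s0n := by rwa [div_le_iff₀ hs0n] at hE2
    calc sm * vk ≤ (Cs * R ^ (-mr)) * Cv :=
          mul_le_mul h1 hvk1 hvk0 (by positivity)
      _ ≤ (E * sk * R ^ (-mr)) * Cv := by
          have h2 : Cs ≤ E * sk := by nlinarith
          nlinarith [mul_le_mul_of_nonneg_right h2 (mul_nonneg hRm.le hCv.le)]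
      _ = E * Cv * R ^ (-mr) * sk := by ring
  · have hKr0' : 0 < Kr := by linarith
    have hCsE : Cs ≤ E * cs := by rwa [div_le_iff₀ hcs] at hE1
    have hRR : R ^ (Kr - mr) * R ^ (-Kr) = R ^ (-mr) := by
      rw [← Real.rpow_add hR0]; congr 1 <;> ring
    calc sm * vk ≤ (Cs / mr * R ^ (-mr)) * (Cv * ρ ^ (-Kr)) :=
          mul_le_mul hsmu hvku hvk0 (by positivity)
      _ ≤ (E * cs / Kr * R ^ (-mr)) * (Cv * ρ ^ (-Kr)) := by
          apply mul_le_mul_of_nonneg_right _ (by positivity)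
          apply mul_le_mul_of_nonneg_right _ hRm.le
          rw [div_le_div_iff₀ (by linarith) hKr0']
          nlinarith
      _ = E * Cv * (R ^ (Kr - mr) * ρ ^ (-Kr)) * (cs / Kr * R ^ (-Kr)) := by
          rw [← hRR]; field_simp
      _ ≤ E * Cv * (R ^ (Kr - mr) * ρ ^ (-Kr)) * sk := by
          apply mul_le_mul_of_nonneg_left hsk (by positivity)

lemma sq_encode_bound (ρ σ D : ℝ) (hρ : 1 < ρ) (hσ : 1 < σ) (hD : 0 < D)
    (Kr Jr Mr Nr : ℝ) (hK0 : 0 ≤ Kr) (hKM : Kr ≤ Mr) (hJ1 : 1 ≤ Jr) (hNr1 : 1 ≤ Nr)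
    (p qn : ℕ) (hp : (p : ℝ) ≤ 2 * Jr) (hq : (qn : ℝ) ≤ 2 * (Mr - Kr) + 1) :
    (D * (ρ ^ (-Mr) * σ ^ (-((Mr - Kr) + (Jr - 1) * Nr)))) ^ 2 ≤
      (D ^ 2 * ρ ^ (-(2 * Mr)) * σ ^ 3) * σ⁻¹ ^ p * σ⁻¹ ^ qn := by
  have hρ0 : (0:ℝ) < ρ := by linarith
  have hσ0 : (0:ℝ) < σ := by linarith
  have hρ2M : (ρ ^ (-Mr)) ^ 2 = ρ ^ (-(2 * Mr)) := by
    rw [sq, ← Real.rpow_add hρ0]; congr 1 <;> ring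
  have hinv : ∀ n : ℕ, σ⁻¹ ^ n = σ ^ (-(n : ℝ)) := by
    intro n
    rw [← Real.rpow_natCast σ⁻¹ n, ← Real.rpow_neg_one σ, ← Real.rpow_mul hσ0.le]
    congr 1 <;> ring
  have hσ3 : σ ^ (3 : ℝ) = σ ^ (3 : ℕ) := by
    rw [show (3:ℝ) = ((3:ℕ):ℝ) by norm_num, Real.rpow_natCast]
  have hσT : (σ ^ (-((Mr - Kr) + (Jr - 1) * Nr))) ^ 2 ≤
      σ ^ (3 : ℝ) * σ ^ (-(p : ℝ)) * σ ^ (-(qn : ℝ)) := by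
    have e1 : (σ ^ (-((Mr - Kr) + (Jr - 1) * Nr))) ^ 2 =
        σ ^ (-(2 * ((Mr - Kr) + (Jr - 1) * Nr))) := by
      rw [sq, ← Real.rpow_add hσ0]; congr 1 <;> ring
    have e2 : σ ^ (3 : ℝ) * σ ^ (-(p : ℝ)) * σ ^ (-(qn : ℝ)) =
        σ ^ ((3 : ℝ) - p - qn) := by
      rw [← Real.rpow_add hσ0, ← Real.rpow_add hσ0]; congr 1 <;> ring
    rw [e1, e2]
    apply Real.rpow_le_rpow_of_exponent_le hσ.le
    have hJrN : 2 * (Jr - 1) * 1 ≤ 2 * (Jr - 1) * Nr :=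
      mul_le_mul_of_nonneg_left hNr1 (by linarith)
    linarith
  calc (D * (ρ ^ (-Mr) * σ ^ (-((Mr - Kr) + (Jr - 1) * Nr)))) ^ 2
      = D ^ 2 * (ρ ^ (-Mr)) ^ 2 * (σ ^ (-((Mr - Kr) + (Jr - 1) * Nr))) ^ 2 := by ring
    _ ≤ D ^ 2 * (ρ ^ (-Mr)) ^ 2 * (σ ^ (3:ℝ) * σ ^ (-(p:ℝ)) * σ ^ (-(qn:ℝ))) := by
        apply mul_le_mul_of_nonneg_left hσT (by positivity)
    _ = (D ^ 2 * ρ ^ (-(2 * Mr)) * σ ^ 3) * σ⁻¹ ^ p * σ⁻¹ ^ qn := by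
        rw [hρ2M, hinv p, hinv qn, hσ3]; ring

/-- MFS convergence on the unit disc, case `ρ < R²`: rate `ρ^{-N/2}`. -/
theorem mfs_convergence_rho_lt_Rsq
    (R ρ cs Cs Cv : ℝ) (hR : 1 < R) (hρ1 : 1 < ρ) (hρ2 : ρ < R ^ 2)
    (hcs : 0 < cs) (hcsCs : cs ≤ Cs) (hCv : 0 < Cv)
    (s v : ℤ → ℂ)
    (hs0 : s 0 ≠ 0) (hs0' : ‖s 0‖ ≤ Cs)
    (hsl : ∀ m : ℤ, m ≠ 0 → cs / |(m : ℝ)| * R ^ (-|m|) ≤ ‖s m‖)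
    (hsu : ∀ m : ℤ, m ≠ 0 → ‖s m‖ ≤ Cs / |(m : ℝ)| * R ^ (-|m|))
    (hv : ∀ m : ℤ, ‖v m‖ ≤ Cv * ρ ^ (-|m|)) :
    ∃ C : ℝ, 0 < C ∧ ∀ N : ℕ, Even N → 2 ≤ N →
      ∃ a : ℤ → ℂ, tErr N s v a ≤ ENNReal.ofReal (C * ρ ^ (-(N : ℝ) / 2)) := by
  have hπ := Real.pi_pos
  have hR0 : (0:ℝ) < R := by linarith
  have hρ0 : (0:ℝ) < ρ := by linarith
  have hs0n : (0:ℝ) < ‖s 0‖ := norm_pos_iff.mpr hs0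
  have hCs : (0:ℝ) < Cs := lt_of_lt_of_le hcs hcsCs
  set E : ℝ := Cs / cs + Cs / ‖s 0‖ with hE_def
  have hE0 : 0 < E := by positivity
  have hE1 : Cs / cs ≤ E := le_add_of_nonneg_right (by positivity)
  have hE2 : Cs / ‖s 0‖ ≤ E := le_add_of_nonneg_left (by positivity)
  set D : ℝ := (E + 1) * Cv with hD_def
  have hD : 0 < D := by positivity
  have hq : 1 < R ^ 2 / ρ := (one_lt_div hρ0).mpr hρ2
  set σ : ℝ := min (min (R ^ 2 / ρ) ρ) R with hσ_def
  have hσ1 : 1 < σ := lt_min (lt_min hq hρ1) hR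
  have hσ0 : (0:ℝ) < σ := by linarith
  have hσq : σ ≤ R ^ 2 / ρ := le_trans (min_le_left _ _) (min_le_left _ _)
  have hσρ : σ ≤ ρ := le_trans (min_le_left _ _) (min_le_right _ _)
  have hσR : σ ≤ R := min_le_right _ _
  set w : ℝ := σ⁻¹ with hw_def
  have hw0 : 0 < w := by positivity
  have hw1 : w < 1 := by rw [hw_def]; exact inv_lt_one_of_one_lt₀ hσ1
  have h1w : 0 < 1 - w := by linarith
  set Y : ℝ := 2 * Real.pi * D ^ 2 * σ ^ 3 * ((1 - w)⁻¹) ^ 2 with hY_def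
  have hY : 0 < Y := by
    have h' : 0 < (1 - w)⁻¹ := inv_pos.mpr h1w
    exact mul_pos (by positivity) (pow_pos h' 2)
  refine ⟨Real.sqrt Y, Real.sqrt_pos.mpr hY, ?_⟩
  intro N hNe hN2
  obtain ⟨M, hM'⟩ := hNe
  have hMN : N = 2 * M := by omega
  have hM1 : 1 ≤ M := by omega
  have hNz : (N : ℤ) = 2 * (M : ℤ) := by exact_mod_cast hMN
  have hMz1 : 1 ≤ (M : ℤ) := by exact_mod_cast hM1
  have hsne : ∀ k : ℤ, s k ≠ 0 := by
    intro k
    rcases eq_or_ne k 0 with rfl | hk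
    · exact hs0
    · have hk' : (0:ℝ) < |(k:ℝ)| := by
        rw [abs_pos]
        exact_mod_cast hk
      have hpos : (0:ℝ) < cs / |(k:ℝ)| * R ^ (-|k|) :=
        mul_pos (div_pos hcs hk') (zpow_pos hR0 _)
      exact norm_pos_iff.mp (lt_of_lt_of_le hpos (hsl k hk))
  set α : ℤ → ℂ := fun k => 2 * (Real.pi : ℂ) / (N : ℂ) * (v k / s k) with hα_def
  refine ⟨α, ?_⟩
  have hNC : ((N : ℂ)) ≠ 0 := Nat.cast_ne_zero.mpr (by omega)
  have hπC : ((Real.pi : ℂ)) ≠ 0 := by exact_mod_cast Real.pi_ne_zero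
  have hterm : ∀ m : ℤ,
      ((N : ℂ) / (2 * (Real.pi : ℂ))) * s m * α (winRep N m) - v m
        = s m * v (winRep N m) / s (winRep N m) - v m := by
    intro m
    have hsk := hsne (winRep N m)
    rw [hα_def]
    field_simp
  have habs : ∀ m : ℤ, |(m:ℝ)| = (m.natAbs : ℝ) := by
    intro m
    rw [Nat.cast_natAbs, Int.cast_abs]
  have hzpR : ∀ m : ℤ, R ^ (-|m|) = R ^ (-(m.natAbs : ℝ)) := by
    intro m
    rw [← Real.rpow_intCast R (-|m|)]
    congr 1
    push_cast
    rw [habs m]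
  have hzpρ : ∀ m : ℤ, ρ ^ (-|m|) = ρ ^ (-(m.natAbs : ℝ)) := by
    intro m
    rw [← Real.rpow_intCast ρ (-|m|)]
    congr 1
    push_cast
    rw [habs m]
  set A0 : ℝ := D ^ 2 * ρ ^ (-(2 * (M:ℝ))) * σ ^ 3 with hA0_def
  have hA0 : 0 < A0 := by
    have := Real.rpow_pos_of_pos hρ0 (-(2 * (M:ℝ)))
    positivity
  set we : ℝ≥0∞ := ENNReal.ofReal w with hwe_def
  have key : ∀ m : ℤ,
      (‖s m * v (winRep N m) / s (winRep N m) - v m‖₊ : ℝ≥0∞) ^ 2 ≤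
        ENNReal.ofReal A0 * we ^ (encJ ((m + (M:ℤ) - 1) / (N:ℤ))) *
          we ^ (encK (M:ℤ) (winRep N m)) := by
    intro m
    by_cases hmw : m ∈ window N
    · have h1 : s m * v m / s m = v m := by
        rw [mul_comm, mul_div_assoc, div_self (hsne m), mul_one]
      have h0 : s m * v (winRep N m) / s (winRep N m) - v m = 0 := by
        rw [winRep_of_mem hNz hMz1 hmw, h1, sub_self]
      rw [h0]
      simp
    · obtain ⟨⟨hk1, hk2⟩, heqm⟩ := winRep_facts hNz hMz1 m
      have hmw' : ¬(-(M:ℤ) + 1 ≤ m ∧ m ≤ (M:ℤ)) := by rwa [window_mem_iff hNz] at hmw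
      have hjne : (m + (M:ℤ) - 1) / (N:ℤ) ≠ 0 := by
        intro h
        rw [h, mul_zero, zero_add] at heqm
        exact hmw' (by constructor <;> omega)
      set k : ℤ := winRep N m with hk_def
      set j : ℤ := (m + (M:ℤ) - 1) / (N:ℤ) with hj_def
      have hjm1 : 1 ≤ j.natAbs := by omega
      have hkM : (k.natAbs : ℤ) ≤ (M:ℤ) := by omega
      have hmM : (M:ℤ) ≤ (m.natAbs : ℤ) := by omega
      have hjNmk : j.natAbs * N ≤ m.natAbs + k.natAbs := by
        have h1 : ((N:ℤ) * j).natAbs = N * j.natAbs := by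
          rw [Int.natAbs_mul, Int.natAbs_natCast]
        have h2 : (N:ℤ) * j = m - k := by omega
        have h3 := Int.natAbs_sub_le m k
        rw [h2] at h1
        rw [mul_comm j.natAbs N]
        omega
      have hmne : m ≠ 0 := by omega
      have hKM : (k.natAbs : ℝ) ≤ (M:ℝ) := by exact_mod_cast hkM
      have hMm : (M:ℝ) ≤ (m.natAbs : ℝ) := by exact_mod_cast hmM
      have hJ1 : (1:ℝ) ≤ (j.natAbs : ℝ) := by exact_mod_cast hjm1
      have hJN : (j.natAbs : ℝ) * (N:ℝ) ≤ (m.natAbs : ℝ) + (k.natAbs : ℝ) := by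
        exact_mod_cast hjNmk
      have hNr : (N:ℝ) = 2 * (M:ℝ) := by exact_mod_cast hMN
      have hM1r : (1:ℝ) ≤ (M:ℝ) := by exact_mod_cast hM1
      have hmr1 : (1:ℝ) ≤ (m.natAbs : ℝ) := by linarith
      have hK0 : (0:ℝ) ≤ (k.natAbs : ℝ) := by positivity
      have hvk : ‖v k‖ ≤ Cv * ρ ^ (-(k.natAbs : ℝ)) := by
        have := hv k; rwa [hzpρ k] at this
      have hvm : ‖v m‖ ≤ Cv * ρ ^ (-(m.natAbs : ℝ)) := by
        have := hv m; rwa [hzpρ m] at this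
      have hsm : ‖s m‖ ≤ Cs / (m.natAbs : ℝ) * R ^ (-(m.natAbs : ℝ)) := by
        have := hsu m hmne; rwa [hzpR m, habs m] at this
      have hskpos : 0 < ‖s k‖ := norm_pos_iff.mpr (hsne k)
      have hskl : ((k.natAbs : ℝ) = 0 ∧ ‖s 0‖ ≤ ‖s k‖) ∨
          ((1:ℝ) ≤ (k.natAbs : ℝ) ∧ cs / (k.natAbs : ℝ) * R ^ (-(k.natAbs : ℝ)) ≤ ‖s k‖) := by
        rcases eq_or_ne k 0 with hk0 | hkne
        · left
          constructor
          · rw [hk0]; simp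
          · rw [hk0]
        · right
          constructor
          · have h1 : 1 ≤ k.natAbs := Int.natAbs_pos.mpr hkne
            exact_mod_cast h1
          · have := hsl k hkne
            rwa [hzpR k, habs k] at this
      have hfrac : ‖s m‖ * ‖v k‖ / ‖s k‖ ≤
          E * Cv * (R ^ ((k.natAbs : ℝ) - (m.natAbs : ℝ)) * ρ ^ (-(k.natAbs : ℝ))) :=
        ratio_bound R ρ cs Cs Cv E ‖s 0‖ hR hρ1 hcs hCs hCv hs0n hE1 hE2
          _ _ hK0 (le_trans hKM hMm) hmr1 _ _ _ (norm_nonneg _) (norm_nonneg _)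
          hskpos hsm hvk hskl
      have hcore1 : R ^ ((k.natAbs : ℝ) - (m.natAbs : ℝ)) * ρ ^ (-(k.natAbs : ℝ)) ≤
          ρ ^ (-(M:ℝ)) * σ ^ (-(((M:ℝ) - (k.natAbs : ℝ)) + ((j.natAbs : ℝ) - 1) * (N:ℝ))) :=
        core1 R ρ σ hR hρ1 hσ1 hσq hσρ hσR _ _ _ _ _ hK0 hKM hJ1 hJN hNr hM1r
      have hcore2 : ρ ^ (-(m.natAbs : ℝ)) ≤
          ρ ^ (-(M:ℝ)) * σ ^ (-(((M:ℝ) - (k.natAbs : ℝ)) + ((j.natAbs : ℝ) - 1) * (N:ℝ))) :=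
        core2 ρ σ hρ1 hσ1 hσρ _ _ _ _ _ hK0 hKM hJ1 hJN hNr hM1r
      have hnorm : ‖s m * v k / s k - v m‖ ≤
          D * (ρ ^ (-(M:ℝ)) * σ ^ (-(((M:ℝ) - (k.natAbs : ℝ)) + ((j.natAbs : ℝ) - 1) * (N:ℝ)))) := by
        calc ‖s m * v k / s k - v m‖ ≤ ‖s m * v k / s k‖ + ‖v m‖ := norm_sub_le _ _
          _ = ‖s m‖ * ‖v k‖ / ‖s k‖ + ‖v m‖ := by rw [norm_div, norm_mul]
          _ ≤ E * Cv * (R ^ ((k.natAbs : ℝ) - (m.natAbs : ℝ)) * ρ ^ (-(k.natAbs : ℝ)))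
              + Cv * ρ ^ (-(m.natAbs : ℝ)) := add_le_add hfrac hvm
          _ ≤ E * Cv * (ρ ^ (-(M:ℝ)) * σ ^ (-(((M:ℝ) - (k.natAbs : ℝ)) + ((j.natAbs : ℝ) - 1) * (N:ℝ))))
              + Cv * (ρ ^ (-(M:ℝ)) * σ ^ (-(((M:ℝ) - (k.natAbs : ℝ)) + ((j.natAbs : ℝ) - 1) * (N:ℝ)))) :=
            add_le_add (mul_le_mul_of_nonneg_left hcore1 (by positivity))
              (mul_le_mul_of_nonneg_left hcore2 hCv.le)
          _ = D * (ρ ^ (-(M:ℝ)) * σ ^ (-(((M:ℝ) - (k.natAbs : ℝ)) + ((j.natAbs : ℝ) - 1) * (N:ℝ)))) := by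
            rw [hD_def]; ring
      have hp : ((encJ j : ℕ) : ℝ) ≤ 2 * (j.natAbs : ℝ) := by exact_mod_cast encJ_le j
      have hqn : ((encK (M:ℤ) k : ℕ) : ℝ) ≤ 2 * ((M:ℝ) - (k.natAbs : ℝ)) + 1 := by
        have h := encK_le hk1 hk2
        have h' : ((encK (M:ℤ) k : ℕ) : ℝ) ≤ ((2 * ((M:ℤ) - (k.natAbs : ℤ)) + 1 : ℤ) : ℝ) := by
          exact_mod_cast h
        push_cast at h'
        rw [habs k] at h'
        linarith
      have hNr1 : (1:ℝ) ≤ (N:ℝ) := by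
        have : 1 ≤ N := by omega
        exact_mod_cast this
      have hsq : ‖s m * v k / s k - v m‖ ^ 2 ≤ A0 * w ^ (encJ j) * w ^ (encK (M:ℤ) k) := by
        calc ‖s m * v k / s k - v m‖ ^ 2
            ≤ (D * (ρ ^ (-(M:ℝ)) * σ ^ (-(((M:ℝ) - (k.natAbs : ℝ)) + ((j.natAbs : ℝ) - 1) * (N:ℝ))))) ^ 2 :=
              pow_le_pow_left₀ (norm_nonneg _) hnorm 2
          _ ≤ (D ^ 2 * ρ ^ (-(2 * (M:ℝ))) * σ ^ 3) * σ⁻¹ ^ (encJ j) * σ⁻¹ ^ (encK (M:ℤ) k) :=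
              sq_encode_bound ρ σ D hρ1 hσ1 hD _ _ _ _ hK0 hKM hJ1 hNr1 _ _ hp hqn
          _ = A0 * w ^ (encJ j) * w ^ (encK (M:ℤ) k) := by rw [hA0_def, hw_def]
      rw [show ((‖s m * v k / s k - v m‖₊ : ℝ≥0∞)) = ENNReal.ofReal ‖s m * v k / s k - v m‖ from
          (ofReal_norm _).symm, ← ENNReal.ofReal_pow (norm_nonneg _)]
      calc ENNReal.ofReal (‖s m * v k / s k - v m‖ ^ 2)
          ≤ ENNReal.ofReal (A0 * w ^ (encJ j) * w ^ (encK (M:ℤ) k)) :=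
            ENNReal.ofReal_le_ofReal hsq
        _ = ENNReal.ofReal A0 * we ^ (encJ j) * we ^ (encK (M:ℤ) k) := by
            rw [ENNReal.ofReal_mul (by positivity), ENNReal.ofReal_mul hA0.le,
              ENNReal.ofReal_pow hw0.le, ENNReal.ofReal_pow hw0.le, hwe_def]
  have hS : (∑' m : ℤ,
        (‖((N : ℂ) / (2 * (Real.pi : ℂ))) * s m * α (winRep N m) - v m‖₊ : ℝ≥0∞) ^ 2)
      ≤ ENNReal.ofReal A0 * ((1 - we)⁻¹ * (1 - we)⁻¹) := by
    have h1 : (∑' m : ℤ,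
          (‖((N : ℂ) / (2 * (Real.pi : ℂ))) * s m * α (winRep N m) - v m‖₊ : ℝ≥0∞) ^ 2) ≤
        ∑' pq : ℕ × ℕ, ENNReal.ofReal A0 * we ^ pq.1 * we ^ pq.2 := by
      apply ENNReal.summable.tsum_le_tsum_of_inj
        (fun m : ℤ => (encJ ((m + (M:ℤ) - 1) / (N:ℤ)), encK (M:ℤ) (winRep N m)))
      · intro m₁ m₂ h
        simp only [Prod.mk.injEq] at h
        have hj := encJ_inj h.1
        obtain ⟨⟨h11, h12⟩, he1⟩ := winRep_facts hNz hMz1 m₁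
        obtain ⟨⟨h21, h22⟩, he2⟩ := winRep_facts hNz hMz1 m₂
        have hk := encK_inj h11 h12 h21 h22 h.2
        rw [hj, hk] at he1
        linarith [he1, he2]
      · intro c _
        exact zero_le
      · intro m
        rw [hterm m]
        exact key m
      · exact ENNReal.summable
    refine h1.trans_eq ?_
    calc ∑' pq : ℕ × ℕ, ENNReal.ofReal A0 * we ^ pq.1 * we ^ pq.2
        = ∑' p : ℕ, ∑' qn : ℕ, ENNReal.ofReal A0 * we ^ p * we ^ qn :=
          ENNReal.tsum_prod (f := fun p qn => ENNReal.ofReal A0 * we ^ p * we ^ qn)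
      _ = ∑' p : ℕ, (ENNReal.ofReal A0 * we ^ p) * (1 - we)⁻¹ := by
          refine tsum_congr fun p => ?_
          rw [ENNReal.tsum_mul_left, ENNReal.tsum_geometric]
      _ = ∑' p : ℕ, (ENNReal.ofReal A0 * (1 - we)⁻¹) * we ^ p := by
          refine tsum_congr fun p => ?_
          ring
      _ = (ENNReal.ofReal A0 * (1 - we)⁻¹) * (1 - we)⁻¹ := by
          rw [ENNReal.tsum_mul_left, ENNReal.tsum_geometric]
      _ = ENNReal.ofReal A0 * ((1 - we)⁻¹ * (1 - we)⁻¹) := by ring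
  have hZ : (1 - we)⁻¹ = ENNReal.ofReal ((1 - w)⁻¹) := by
    rw [ENNReal.ofReal_inv_of_pos h1w, ENNReal.ofReal_sub 1 hw0.le, ENNReal.ofReal_one, hwe_def]
  have hbound : tErr N s v α ≤
      (ENNReal.ofReal (2 * Real.pi) * (ENNReal.ofReal A0 * ((1 - we)⁻¹ * (1 - we)⁻¹))) ^ (1/2 : ℝ) := by
    unfold tErr
    exact ENNReal.rpow_le_rpow (mul_le_mul_right hS _) (by norm_num)
  refine hbound.trans ?_
  rw [hZ, ← ENNReal.ofReal_mul (inv_pos.mpr h1w).le, ← ENNReal.ofReal_mul hA0.le,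
    ← ENNReal.ofReal_mul (by positivity), ENNReal.ofReal_rpow_of_pos (by positivity)]
  apply ENNReal.ofReal_le_ofReal
  rw [show (1/2 : ℝ) = ((1:ℝ)/2) from rfl, ← Real.sqrt_eq_rpow]
  have hXY : 2 * Real.pi * (A0 * ((1 - w)⁻¹ * (1 - w)⁻¹)) = Y * ρ ^ (-(2 * (M:ℝ))) := by
    rw [hY_def, hA0_def]; ring
  rw [hXY, Real.sqrt_mul hY.le]
  have hsqrtρ : Real.sqrt (ρ ^ (-(2 * (M:ℝ)))) = ρ ^ (-((M:ℝ))) := by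
    rw [show ρ ^ (-(2 * (M:ℝ))) = (ρ ^ (-((M:ℝ)))) ^ 2 from by
        rw [sq, ← Real.rpow_add hρ0]; congr 1; ring,
      Real.sqrt_sq (Real.rpow_nonneg hρ0.le _)]
  rw [hsqrtρ, show (-(N:ℝ)/2) = -((M:ℝ)) from by push_cast [hMN]; ring]
end
end

section
/- Assume the MFS setup with eigenvalue bounds (H_s), and suppose the boundary data is entire in the sense that for every σ > 1 there exists C_σ > 0 with |v̂(m)| ≤ C_σ·σ^{−|m|} for all m ∈ ℤ. Then for any R > 1 there exists a constant C > 0, independent of N, such that for every even integer N ≥ 2 there exists a coefficient vector α̂ ∈ ℂ^N with boundary error t(α̂) ≤ C·R^{−N}. -/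
open scoped BigOperators ENNReal NNReal

noncomputable section

lemma mem_window_iff {N : ℕ} {k : ℤ} :
    k ∈ window N ↔ -(N : ℤ) / 2 + 1 ≤ k ∧ k ≤ (N : ℤ) / 2 := Finset.mem_Icc

lemma winRep_mem_window {N : ℕ} (hNe : Even N) (hN : 2 ≤ N) (m : ℤ) : winRep N m ∈ window N := by
  obtain ⟨t, ht⟩ := hNe
  have ht' : (N : ℤ) = 2 * t := by exact_mod_cast ht.trans (two_mul t).symm
  have hN0 : (0 : ℤ) < (N : ℤ) := by exact_mod_cast Nat.lt_of_lt_of_le Nat.zero_lt_two hN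
  have h1 := Int.emod_nonneg (m + (N : ℤ) / 2 - 1) (ne_of_gt hN0)
  have h2 := Int.emod_lt_of_pos (m + (N : ℤ) / 2 - 1) hN0
  rw [mem_window_iff, winRep]
  omega

lemma dvd_sub_winRep (N : ℕ) (m : ℤ) : (N : ℤ) ∣ m - winRep N m := by
  have h := Int.mul_ediv_add_emod (m + (N : ℤ) / 2 - 1) (N : ℤ)
  have : m - winRep N m = (N : ℤ) * ((m + (N : ℤ) / 2 - 1) / (N : ℤ)) := by
    rw [winRep]; omega
  exact this ▸ Dvd.intro _ rfl

lemma winRep_eq_self {N : ℕ} (hNe : Even N) (hN : 2 ≤ N) {m : ℤ} (hm : m ∈ window N) :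
    winRep N m = m := by
  obtain ⟨t, ht⟩ := hNe
  have ht' : (N : ℤ) = 2 * t := by exact_mod_cast ht.trans (two_mul t).symm
  rw [mem_window_iff] at hm
  have h0 : (0:ℤ) ≤ m + (N : ℤ) / 2 - 1 := by omega
  have h1 : m + (N : ℤ) / 2 - 1 < (N : ℤ) := by omega
  rw [winRep, Int.emod_eq_of_lt h0 h1]; omega

lemma not_window_bounds {N : ℕ} (hNe : Even N) (hN : 2 ≤ N) {m : ℤ} (hm : m ∉ window N) :
    N ≤ 2 * m.natAbs ∧ (winRep N m).natAbs ≤ m.natAbs ∧ 1 ≤ m.natAbs ∧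
      N + Nat.dist m.natAbs N ≤ m.natAbs + 2 * (winRep N m).natAbs := by
  obtain ⟨t, ht⟩ := hNe
  have ht' : (N : ℤ) = 2 * t := by exact_mod_cast ht.trans (two_mul t).symm
  set k := winRep N m with hk
  have hkw := winRep_mem_window ⟨t, ht⟩ hN m
  rw [mem_window_iff] at hkw hm
  have hne : m ≠ k := by intro h; exact hm (h ▸ hkw)
  have hdvd : (N : ℤ) ∣ m - k := dvd_sub_winRep N m
  have habs : (N : ℤ) ≤ |m - k| := Int.le_of_dvd (abs_pos.mpr (sub_ne_zero.mpr hne)) ((dvd_abs _ _).mpr hdvd)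
  rw [Int.abs_eq_natAbs] at habs
  push_neg at hm
  simp only [Nat.dist]
  omega

lemma zpow_neg_abs {R : ℝ} (m : ℤ) : R ^ (-|m|) = R⁻¹ ^ m.natAbs := by
  rw [Int.abs_eq_natAbs, zpow_neg, zpow_natCast, inv_pow]

lemma term_bound
    (R cs Cs Cσ : ℝ) (hR : 1 < R) (hcs : 0 < cs) (hCs : 0 < Cs) (hCσ : 0 < Cσ)
    (s v : ℤ → ℂ) {N : ℕ}
    (hsl : ∀ k : ℤ, k ∈ window N → cs / max 1 |(k : ℝ)| * R ^ (-|k|) ≤ ‖s k‖)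
    (hsu : ∀ m : ℤ, m ≠ 0 → ‖s m‖ ≤ Cs / |(m : ℝ)| * R ^ (-|m|))
    (hv3 : ∀ m : ℤ, ‖v m‖ ≤ Cσ * (R ^ (3 : ℕ)) ^ (-|m|))
    (hNe : Even N) (hN : 2 ≤ N) {m : ℤ} (hm : m ∉ window N) :
    ‖s m * v (winRep N m) / s (winRep N m) - v m‖ ≤
      (Cs / cs * Cσ + Cσ) * (R⁻¹ ^ N * R⁻¹ ^ Nat.dist m.natAbs N) := by
  have hR0 : (0:ℝ) < R := lt_trans one_pos hR
  have hr0 : (0:ℝ) < R⁻¹ := inv_pos.mpr hR0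
  have hr1 : R⁻¹ ≤ 1 := by
    rw [inv_le_one_iff₀]; right; exact le_of_lt hR
  set r := R⁻¹ with hrdef
  set k := winRep N m with hk
  have hkw : k ∈ window N := winRep_mem_window hNe hN m
  obtain ⟨hm2, hkm, hm1, hkey⟩ := not_window_bounds hNe hN hm
  set a := m.natAbs with ha
  set b := k.natAbs with hb
  set d := Nat.dist a N with hd
  -- cast facts
  have hma : |(m:ℝ)| = (a:ℝ) := by rw [ha, Nat.cast_natAbs, Int.cast_abs]
  have hka : |(k:ℝ)| = (b:ℝ) := by rw [hb, Nat.cast_natAbs, Int.cast_abs]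
  have hma1 : (1:ℝ) ≤ (a:ℝ) := by exact_mod_cast hm1
  have hba : (b:ℝ) ≤ (a:ℝ) := by exact_mod_cast hkm
  have hm0 : m ≠ 0 := by
    intro h; rw [h] at ha; simp at ha; omega
  -- set M
  set M : ℝ := max 1 |(k:ℝ)| with hM
  have hM1 : (1:ℝ) ≤ M := le_max_left _ _
  have hM0 : (0:ℝ) < M := lt_of_lt_of_le one_pos hM1
  have hMa : M ≤ (a:ℝ) := by
    rw [hM, hka]; exact max_le hma1 hba
  have ha0 : (0:ℝ) < (a:ℝ) := lt_of_lt_of_le one_pos hma1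
  -- norm bounds
  have hsm : ‖s m‖ ≤ Cs / (a:ℝ) * r ^ a := by
    have := hsu m hm0
    rwa [hma, zpow_neg_abs, ha] at this
  have hsk : cs / M * r ^ b ≤ ‖s k‖ := by
    have := hsl k hkw
    rwa [zpow_neg_abs] at this
  have hsk0 : (0:ℝ) < ‖s k‖ := lt_of_lt_of_le (by positivity) hsk
  have hvk : ‖v k‖ ≤ Cσ * r ^ (3 * b) := by
    have := hv3 k
    rwa [zpow_neg_abs, ← inv_pow, ← pow_mul] at this
  have hvm : ‖v m‖ ≤ Cσ * r ^ (3 * a) := by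
    have := hv3 m
    rwa [zpow_neg_abs, ← inv_pow, ← pow_mul] at this
  -- exponent inequalities
  have he1 : N + d ≤ a + 2 * b := hkey
  have he2 : N + d ≤ 3 * a := by simp only [hd, Nat.dist] at *; omega
  -- main product bound
  have hmain : ‖s m‖ * ‖v k‖ / ‖s k‖ ≤ Cs / cs * Cσ * (r ^ N * r ^ d) := by
    rw [div_le_iff₀ hsk0]
    calc ‖s m‖ * ‖v k‖ ≤ (Cs / (a:ℝ) * r ^ a) * (Cσ * r ^ (3 * b)) := by
          apply mul_le_mul hsm hvk (norm_nonneg _) (by positivity)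
      _ = (Cs / cs * Cσ * (M / (a:ℝ)) * r ^ (a + 2 * b)) * (cs / M * r ^ b) := by
          field_simp
          ring
      _ ≤ (Cs / cs * Cσ * (r ^ N * r ^ d)) * (cs / M * r ^ b) := by
          apply mul_le_mul_of_nonneg_right _ (by positivity)
          rw [← pow_add]
          calc Cs / cs * Cσ * (M / (a:ℝ)) * r ^ (a + 2 * b)
              ≤ Cs / cs * Cσ * 1 * r ^ (N + d) := by
                apply mul_le_mul _ (pow_le_pow_of_le_one (le_of_lt hr0) hr1 he1)
                  (by positivity) (by positivity)
                apply mul_le_mul_of_nonneg_left _ (by positivity)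
                exact (div_le_one ha0).mpr hMa
            _ = Cs / cs * Cσ * r ^ (N + d) := by ring
      _ ≤ (Cs / cs * Cσ * (r ^ N * r ^ d)) * ‖s k‖ := by
          apply mul_le_mul_of_nonneg_left hsk (by positivity)
  calc ‖s m * v k / s k - v m‖ ≤ ‖s m * v k / s k‖ + ‖v m‖ := norm_sub_le _ _
    _ = ‖s m‖ * ‖v k‖ / ‖s k‖ + ‖v m‖ := by rw [norm_div, norm_mul]
    _ ≤ Cs / cs * Cσ * (r ^ N * r ^ d) + Cσ * (r ^ N * r ^ d) := by
        apply add_le_add hmain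
        calc ‖v m‖ ≤ Cσ * r ^ (3 * a) := hvm
          _ ≤ Cσ * r ^ (N + d) := by
              apply mul_le_mul_of_nonneg_left
                (pow_le_pow_of_le_one (le_of_lt hr0) hr1 he2) (le_of_lt hCσ)
          _ = Cσ * (r ^ N * r ^ d) := by rw [pow_add]
    _ = (Cs / cs * Cσ + Cσ) * (r ^ N * r ^ d) := by ring

lemma tsum_nat_dist_le (q : ℝ≥0∞) (hq : q ≤ 1) (N : ℕ) :
    ∑' n : ℕ, q ^ Nat.dist n N ≤ 2 * (1 - q)⁻¹ := by
  have h1 : ∑ i ∈ Finset.range N, q ^ Nat.dist i N ≤ (1 - q)⁻¹ := by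
    rw [← Finset.sum_range_reflect]
    have hc : ∀ i ∈ Finset.range N, q ^ Nat.dist (N - 1 - i) N = q ^ (i + 1) := by
      intro i hi
      rw [Finset.mem_range] at hi
      congr 1
      simp only [Nat.dist]
      omega
    rw [Finset.sum_congr rfl hc]
    calc ∑ i ∈ Finset.range N, q ^ (i + 1) ≤ ∑' i : ℕ, q ^ (i + 1) :=
          ENNReal.sum_le_tsum _
      _ = q * (1 - q)⁻¹ := ENNReal.tsum_geometric_add_one q
      _ ≤ 1 * (1 - q)⁻¹ := mul_le_mul_left hq _
      _ = (1 - q)⁻¹ := one_mul _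
  have h2 : ∑' i : ℕ, q ^ Nat.dist (i + N) N = (1 - q)⁻¹ := by
    have hc : ∀ i : ℕ, Nat.dist (i + N) N = i := by
      intro i; simp only [Nat.dist]; omega
    simp_rw [hc]
    exact ENNReal.tsum_geometric q
  calc ∑' n : ℕ, q ^ Nat.dist n N
      = ∑ i ∈ Finset.range N, q ^ Nat.dist i N + ∑' i : ℕ, q ^ Nat.dist (i + N) N :=
        (Summable.sum_add_tsum_nat_add' (f := fun n : ℕ => q ^ Nat.dist n N) (k := N) ENNReal.summable).symm
    _ ≤ (1 - q)⁻¹ + (1 - q)⁻¹ := add_le_add h1 (le_of_eq h2)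
    _ = 2 * (1 - q)⁻¹ := (two_mul _).symm

lemma tsum_int_dist_le (q : ℝ≥0∞) (hq : q ≤ 1) (N : ℕ) :
    ∑' m : ℤ, q ^ Nat.dist m.natAbs N ≤ 4 * (1 - q)⁻¹ := by
  rw [tsum_of_nat_of_neg_add_one ENNReal.summable ENNReal.summable]
  have hpos : ∑' n : ℕ, q ^ Nat.dist ((n : ℤ)).natAbs N = ∑' n : ℕ, q ^ Nat.dist n N := by
    simp
  have hneg : ∑' n : ℕ, q ^ Nat.dist ((-(n + 1) : ℤ)).natAbs N
      = ∑' n : ℕ, q ^ Nat.dist (n + 1) N := by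
    apply tsum_congr
    intro n
    have : ((-(n + 1) : ℤ)).natAbs = n + 1 := by
      omega
    rw [this]
  rw [hpos, hneg]
  have hle : ∑' n : ℕ, q ^ Nat.dist (n + 1) N ≤ ∑' n : ℕ, q ^ Nat.dist n N := by
    rw [tsum_eq_zero_add' (f := fun n : ℕ => q ^ Nat.dist n N) ENNReal.summable]
    exact le_add_self
  calc ∑' n : ℕ, q ^ Nat.dist n N + ∑' n : ℕ, q ^ Nat.dist (n + 1) N
      ≤ 2 * (1 - q)⁻¹ + 2 * (1 - q)⁻¹ :=
        add_le_add (tsum_nat_dist_le q hq N) (hle.trans (tsum_nat_dist_le q hq N))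
    _ = 4 * (1 - q)⁻¹ := by ring

/-- MFS convergence on the unit disc for entire boundary data: rate `R^{-N}` for any `R > 1`. -/
theorem mfs_convergence_entire_data
    (R cs Cs : ℝ) (hR : 1 < R)
    (hcs : 0 < cs) (hcsCs : cs ≤ Cs)
    (s v : ℤ → ℂ)
    (hs0 : s 0 ≠ 0) (hs0' : ‖s 0‖ ≤ Cs)
    (hsl : ∀ m : ℤ, m ≠ 0 → cs / |(m : ℝ)| * R ^ (-|m|) ≤ ‖s m‖)
    (hsu : ∀ m : ℤ, m ≠ 0 → ‖s m‖ ≤ Cs / |(m : ℝ)| * R ^ (-|m|))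
    (hv : ∀ σ : ℝ, 1 < σ → ∃ Cσ : ℝ, 0 < Cσ ∧ ∀ m : ℤ, ‖v m‖ ≤ Cσ * σ ^ (-|m|)) :
    ∃ C : ℝ, 0 < C ∧ ∀ N : ℕ, Even N → 2 ≤ N →
      ∃ a : ℤ → ℂ, tErr N s v a ≤ ENNReal.ofReal (C * R ^ (-(N : ℝ))) := by
  have hR0 : (0:ℝ) < R := lt_trans one_pos hR
  have hCs : (0:ℝ) < Cs := lt_of_lt_of_le hcs hcsCs
  have hr0 : (0:ℝ) < R⁻¹ := inv_pos.mpr hR0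
  have hr1 : R⁻¹ < 1 := by
    rw [inv_lt_one_iff₀]; right; exact hR
  have hσ : (1:ℝ) < R ^ (3:ℕ) := one_lt_pow₀ hR (by norm_num)
  obtain ⟨Cσ, hCσ, hvb⟩ := hv (R ^ (3:ℕ)) hσ
  set cs' := min cs ‖s 0‖ with hcs'def
  have hcs'0 : (0:ℝ) < cs' := lt_min hcs (norm_pos_iff.mpr hs0)
  set B := Cs / cs' * Cσ + Cσ with hBdef
  have hB0 : (0:ℝ) < B := by positivity
  have hrr1 : R⁻¹ ^ 2 < 1 := pow_lt_one₀ (le_of_lt hr0) hr1 two_ne_zero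
  have hrr0 : (0:ℝ) < R⁻¹ ^ 2 := by positivity
  have h1rr : (0:ℝ) < 1 - R⁻¹ ^ 2 := by linarith
  set S' := 4 * (1 - R⁻¹ ^ 2)⁻¹ with hS'def
  have hS'0 : (0:ℝ) < S' := by positivity
  set C := Real.sqrt (2 * Real.pi * B ^ 2 * S') with hCdef
  have hC0 : (0:ℝ) < C := Real.sqrt_pos.mpr (by positivity)
  refine ⟨C, hC0, ?_⟩
  intro N hNe hN
  have hNne : (N:ℂ) ≠ 0 := by
    simp only [ne_eq, Nat.cast_eq_zero]; omega
  have hπne : (2 * (Real.pi : ℂ)) ≠ 0 := by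
    simp [Complex.ofReal_ne_zero, Real.pi_ne_zero]
  -- nonvanishing of s on the window
  have hsne : ∀ k ∈ window N, s k ≠ 0 := by
    intro k hk
    by_cases hk0 : k = 0
    · rwa [hk0]
    · have hpos : (0:ℝ) < cs / |(k : ℝ)| * R ^ (-|k|) := by
        have : (0:ℝ) < |(k:ℝ)| := by
          simp only [abs_pos, ne_eq, Int.cast_eq_zero]; exact hk0
        positivity
      have := lt_of_lt_of_le hpos (hsl k hk0)
      exact norm_pos_iff.mp this
  -- the coefficient vector
  set a : ℤ → ℂ := fun k => (2 * (Real.pi : ℂ) / (N : ℂ)) * (v k / s k) with hadef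
  refine ⟨a, ?_⟩
  -- adapted lower bound for s on the window
  have hsl' : ∀ k : ℤ, k ∈ window N → cs' / max 1 |(k : ℝ)| * R ^ (-|k|) ≤ ‖s k‖ := by
    intro k hk
    by_cases hk0 : k = 0
    · subst hk0
      simp only [Int.cast_zero, abs_zero, abs_zero]
      norm_num
      exact min_le_right _ _
    · have h1k : (1:ℝ) ≤ |(k:ℝ)| := by
        have h1 : (1:ℤ) ≤ |k| := Int.one_le_abs (by exact hk0)
        calc (1:ℝ) ≤ ((|k| : ℤ) : ℝ) := by exact_mod_cast h1
          _ = |(k:ℝ)| := by push_cast; ring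
      have h0k : (0:ℝ) < |(k:ℝ)| := lt_of_lt_of_le one_pos h1k
      rw [max_eq_right h1k]
      refine le_trans ?_ (hsl k hk0)
      have hle : cs' ≤ cs := min_le_left _ _
      gcongr
  -- the summand vanishes on the window
  have hEw : ∀ m ∈ window N,
      ((N : ℂ) / (2 * (Real.pi : ℂ))) * s m * a (winRep N m) - v m = 0 := by
    intro m hm
    rw [winRep_eq_self hNe hN hm, hadef]
    have hsm := hsne m hm
    field_simp
    ring
  -- the summand off the window
  have hEnw : ∀ m : ℤ, m ∉ window N →
      ((N : ℂ) / (2 * (Real.pi : ℂ))) * s m * a (winRep N m) - v m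
        = s m * v (winRep N m) / s (winRep N m) - v m := by
    intro m hm
    rw [hadef]
    have hone : ((N:ℂ) / (2 * (Real.pi:ℂ))) * (2 * (Real.pi:ℂ) / (N:ℂ)) = 1 := by
      field_simp
    calc ((N : ℂ) / (2 * (Real.pi : ℂ))) * s m
            * (2 * (Real.pi:ℂ) / (N : ℂ) * (v (winRep N m) / s (winRep N m))) - v m
        = (((N:ℂ) / (2 * (Real.pi:ℂ))) * (2 * (Real.pi:ℂ) / (N:ℂ)))
            * (s m * (v (winRep N m) / s (winRep N m))) - v m := by ring
      _ = s m * v (winRep N m) / s (winRep N m) - v m := by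
          rw [hone, one_mul, mul_div_assoc]
  set q : ℝ≥0∞ := ENNReal.ofReal (R⁻¹ ^ 2) with hqdef
  have hq1 : q ≤ 1 := by
    rw [hqdef, ← ENNReal.ofReal_one]
    exact ENNReal.ofReal_le_ofReal (le_of_lt hrr1)
  -- pointwise bound on the summand
  have hEb : ∀ m : ℤ,
      ((‖((N : ℂ) / (2 * (Real.pi : ℂ))) * s m * a (winRep N m) - v m‖₊ : ℝ≥0∞)) ^ 2
        ≤ ENNReal.ofReal ((B * R⁻¹ ^ N) ^ 2) * q ^ Nat.dist m.natAbs N := by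
    intro m
    by_cases hm : m ∈ window N
    · rw [hEw m hm]
      simp
    · have hb := term_bound R cs' Cs Cσ hR hcs'0 hCs hCσ s v hsl' hsu hvb hNe hN hm
      rw [hEnw m hm]
      rw [← ENNReal.ofReal_coe_nnreal, coe_nnnorm, ← ENNReal.ofReal_pow (norm_nonneg _)]
      calc ENNReal.ofReal (‖s m * v (winRep N m) / s (winRep N m) - v m‖ ^ 2)
          ≤ ENNReal.ofReal ((B * (R⁻¹ ^ N * R⁻¹ ^ Nat.dist m.natAbs N)) ^ 2) :=
            ENNReal.ofReal_le_ofReal (pow_le_pow_left₀ (norm_nonneg _) hb 2)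
        _ = ENNReal.ofReal ((B * R⁻¹ ^ N) ^ 2) * q ^ Nat.dist m.natAbs N := by
            rw [hqdef, ← ENNReal.ofReal_pow (le_of_lt hrr0),
              ← ENNReal.ofReal_mul (by positivity)]
            congr 1
            ring
  -- sum the bound
  have hT : (∑' m : ℤ,
        ((‖((N : ℂ) / (2 * (Real.pi : ℂ))) * s m * a (winRep N m) - v m‖₊ : ℝ≥0∞)) ^ 2)
      ≤ ENNReal.ofReal ((B * R⁻¹ ^ N) ^ 2) * ENNReal.ofReal S' := by
    have hS : (∑' m : ℤ, q ^ Nat.dist m.natAbs N) ≤ ENNReal.ofReal S' := by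
      refine le_trans (tsum_int_dist_le q hq1 N) ?_
      have h1q : (1 : ℝ≥0∞) - q = ENNReal.ofReal (1 - R⁻¹ ^ 2) := by
        rw [hqdef, ENNReal.ofReal_sub _ (le_of_lt hrr0), ENNReal.ofReal_one]
      rw [h1q, ← ENNReal.ofReal_inv_of_pos h1rr, hS'def]
      rw [ENNReal.ofReal_mul (by norm_num)]
      norm_num
    calc (∑' m : ℤ,
        ((‖((N : ℂ) / (2 * (Real.pi : ℂ))) * s m * a (winRep N m) - v m‖₊ : ℝ≥0∞)) ^ 2)
        ≤ ∑' m : ℤ, ENNReal.ofReal ((B * R⁻¹ ^ N) ^ 2) * q ^ Nat.dist m.natAbs N :=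
          ENNReal.tsum_le_tsum hEb
      _ = ENNReal.ofReal ((B * R⁻¹ ^ N) ^ 2) * ∑' m : ℤ, q ^ Nat.dist m.natAbs N :=
          ENNReal.tsum_mul_left
      _ ≤ _ := mul_le_mul_right hS _
  -- conclude
  have hfinal : ENNReal.ofReal (2 * Real.pi)
      * (ENNReal.ofReal ((B * R⁻¹ ^ N) ^ 2) * ENNReal.ofReal S')
      = ENNReal.ofReal ((C * R⁻¹ ^ N) ^ 2) := by
    rw [← ENNReal.ofReal_mul (by positivity), ← ENNReal.ofReal_mul (by positivity)]
    congr 1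
    have hsplit : (C * R⁻¹ ^ N) ^ 2 = C ^ 2 * (R⁻¹ ^ N) ^ 2 := by ring
    have hC2 : C ^ 2 = 2 * Real.pi * B ^ 2 * S' := Real.sq_sqrt (by positivity)
    rw [hsplit, hC2]
    ring
  have hrpow : R ^ (-(N:ℝ)) = R⁻¹ ^ N := by
    rw [Real.rpow_neg (le_of_lt hR0), Real.rpow_natCast, inv_pow]
  rw [hrpow]
  calc tErr N s v a
      ≤ (ENNReal.ofReal ((C * R⁻¹ ^ N) ^ 2)) ^ (1/2 : ℝ) := by
        rw [tErr]
        apply ENNReal.rpow_le_rpow _ (by norm_num : (0:ℝ) ≤ 1/2)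
        rw [← hfinal]
        exact mul_le_mul_right hT _
    _ = ENNReal.ofReal (C * R⁻¹ ^ N) := by
        rw [ENNReal.ofReal_rpow_of_nonneg (by positivity) (by norm_num)]
        congr 1
        rw [← Real.rpow_natCast (C * R⁻¹ ^ N) 2, ← Real.rpow_mul (by positivity)]
        norm_num
end
end

section
/- Assume the MFS setup with eigenvalue upper bound |ŝ(m)| ≤ (C_s/|m|)·R^{−|m|} for m ≠ 0, and boundary-data lower bound |v̂(m)| ≥ c_v·ρ^{−|m|} for all m ∈ ℤ, where R > ρ > 1 and c_v > 0. Let c > 0 and define N_min := 2·max( ln(√(2/π)·c/c_v)/ln ρ , 1 ). Then there exists a constant C > 0 (depending on c, c_v, C_s, R, ρ but not on N) such that: for every even integer N with N > 3 + N_min, and every coefficient vector α̂ ∈ ℂ^N whose boundary error satisfies t(α̂) ≤ c·ρ^{−N/2}, the MFS coefficient norm satisfies √N·|α̂| ≥ C·√N·(R/ρ)^{N/2}; equivalently |α̂| ≥ C·(R/ρ)^{N/2}. -/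
open scoped BigOperators ENNReal NNReal

noncomputable section

set_option maxHeartbeats 1000000

/-- Exponential growth of the MFS coefficient norm when the charge radius `R` exceeds the
singularity radius `ρ` of the boundary data: any coefficient vector achieving error
`t ≤ c·ρ^{-N/2}` must satisfy `|α̂| ≥ C·(R/ρ)^{N/2}`. -/
theorem mfs_coefficient_growth
    (R ρ cv Cs c : ℝ) (hρ : 1 < ρ) (hρR : ρ < R)
    (hcv : 0 < cv) (hCs : 0 < Cs) (hc : 0 < c)
    (s v : ℤ → ℂ)
    (hsu : ∀ m : ℤ, m ≠ 0 → ‖s m‖ ≤ Cs / |(m : ℝ)| * R ^ (-|m|))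
    (hv : ∀ m : ℤ, cv * ρ ^ (-|m|) ≤ ‖v m‖) :
    ∃ C : ℝ, 0 < C ∧ ∀ N : ℕ, Even N →
      (N : ℝ) > 3 + 2 * max (Real.log (Real.sqrt (2 / Real.pi) * c / cv) / Real.log ρ) 1 →
      ∀ a : ℤ → ℂ,
        tErr N s v a ≤ ENNReal.ofReal (c * ρ ^ (-(N : ℝ) / 2)) →
        C * (R / ρ) ^ ((N : ℝ) / 2) ≤ coefNorm N a := by
  have hρ0 : (0:ℝ) < ρ := by linarith
  have hR0 : (0:ℝ) < R := by linarith
  have hπ : (0:ℝ) < Real.pi := Real.pi_pos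
  set L' : ℝ := Real.log (Real.sqrt (2 / Real.pi) * c / cv) / Real.log ρ with hL'def
  set L : ℝ := max L' 1 with hLdef
  set d : ℕ := ⌈L⌉₊ with hddef
  have hL1 : (1:ℝ) ≤ L := le_max_right _ _
  have hd1 : 1 ≤ d := by
    rw [hddef, Nat.one_le_ceil_iff]; linarith
  have hLd : L ≤ d := Nat.le_ceil L
  have hdL : (d:ℝ) < L + 1 := Nat.ceil_lt_add_one (by linarith)
  -- the key bound ρ^d ≥ √(2/π)·c/cv
  have hX0 : 0 < Real.sqrt (2 / Real.pi) * c / cv := by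
    have : 0 < Real.sqrt (2 / Real.pi) := Real.sqrt_pos.mpr (by positivity)
    positivity
  have hXd : Real.sqrt (2 / Real.pi) * c / cv ≤ ρ ^ d := by
    have hlogρ : 0 < Real.log ρ := Real.log_pos hρ
    have h1 : Real.log (Real.sqrt (2 / Real.pi) * c / cv) ≤ (d:ℝ) * Real.log ρ := by
      have : L' * Real.log ρ ≤ (d:ℝ) * Real.log ρ := by
        have : L' ≤ (d:ℝ) := le_trans (le_max_left _ _) hLd
        nlinarith
      calc Real.log (Real.sqrt (2 / Real.pi) * c / cv) = L' * Real.log ρ := by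
            rw [hL'def]; field_simp
        _ ≤ (d:ℝ) * Real.log ρ := this
    calc Real.sqrt (2 / Real.pi) * c / cv
        = Real.exp (Real.log (Real.sqrt (2 / Real.pi) * c / cv)) := (Real.exp_log hX0).symm
      _ ≤ Real.exp ((d:ℝ) * Real.log ρ) := Real.exp_le_exp.mpr h1
      _ = ρ ^ d := by
          rw [← Real.log_pow, Real.exp_log (by positivity)]
  refine ⟨cv * Real.pi / (Cs * (2*((d:ℝ)+1))) * (ρ/R)^d, by positivity, ?_⟩
  intro N hNe hNgt a ht
  obtain ⟨K, hK⟩ : ∃ K : ℕ, N = 2 * K := ⟨N/2, by rcases hNe with ⟨t, ht'⟩; omega⟩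
  have hKR : (N:ℝ) = 2 * K := by exact_mod_cast congrArg (Nat.cast : ℕ → ℝ) hK
  have hKd : d + 1 ≤ K := by
    have : (d:ℝ) + 1/2 < (K:ℝ) := by rw [hLdef] at hNgt; push_cast at hNgt ⊢; nlinarith
    have : (d:ℝ) < (K:ℝ) := by linarith
    exact_mod_cast Nat.add_one_le_iff.mpr (by exact_mod_cast this)
  set m : ℤ := (K:ℤ) - d with hmdef
  have hm1 : 1 ≤ m := by omega
  have hmK : m ≤ (K:ℤ) := by omega
  have hNZ : (N:ℤ)/2 = (K:ℤ) := by omega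
  have hmwin : m ∈ window N := by
    rw [window, Finset.mem_Icc]; omega
  have hwr : winRep N m = m := by
    rw [winRep, hNZ]
    have h0 : (0:ℤ) ≤ m + K - 1 := by omega
    have h1 : m + (K:ℤ) - 1 < (N:ℤ) := by omega
    rw [Int.emod_eq_of_lt h0 h1]; ring
  set mr : ℝ := (m:ℝ) with hmrdef
  have hmr1 : 1 ≤ mr := by rw [hmrdef]; exact_mod_cast hm1
  have hmrK : mr = (K:ℝ) - d := by rw [hmrdef, hmdef]; push_cast; ring
  set u : ℂ := ((N : ℂ) / (2 * (Real.pi : ℂ))) * s m * a (winRep N m) - v m with hudef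
  -- step 1: per-term bound ‖u‖ ≤ (cv/2) * ρ^(-mr)
  have hterm : 2 * Real.pi * ‖u‖^2 ≤ (c * ρ ^ (-(N:ℝ)/2))^2 := by
    set E := c * ρ ^ (-(N:ℝ)/2) with hEdef
    have hE0 : 0 ≤ E := by positivity
    set X := (ENNReal.ofReal (2 * Real.pi) *
      ∑' m' : ℤ, (‖((N : ℂ) / (2 * (Real.pi : ℂ))) * s m' * a (winRep N m') - v m'‖₊ : ℝ≥0∞) ^ 2)
      with hXdef
    have h2 : X ≤ ENNReal.ofReal (E^2) := by
      have h3 := ENNReal.rpow_le_rpow ht (by norm_num : (0:ℝ) ≤ 2)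
      calc X = (X ^ (1/2:ℝ)) ^ (2:ℝ) := by
            rw [← ENNReal.rpow_mul, show (1/2*2:ℝ) = 1 by norm_num, ENNReal.rpow_one]
        _ ≤ (ENNReal.ofReal E) ^ (2:ℝ) := h3
        _ = ENNReal.ofReal (E^2) := by
            rw [show (2:ℝ) = ((2:ℕ):ℝ) by norm_num, ENNReal.rpow_natCast,
              ← ENNReal.ofReal_pow hE0]
    have h4 : (‖u‖₊ : ℝ≥0∞)^2 ≤
        ∑' m' : ℤ, (‖((N : ℂ) / (2 * (Real.pi : ℂ))) * s m' * a (winRep N m') - v m'‖₊ : ℝ≥0∞) ^ 2 := by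
      rw [hudef]
      exact ENNReal.le_tsum m
    have h5 : ENNReal.ofReal (2*Real.pi * ‖u‖^2) ≤ ENNReal.ofReal (E^2) := by
      rw [ENNReal.ofReal_mul (by positivity : (0:ℝ) ≤ 2*Real.pi),
        ENNReal.ofReal_pow (norm_nonneg u), ofReal_norm]
      exact le_trans (mul_le_mul_right h4 _) h2
    exact (ENNReal.ofReal_le_ofReal_iff (by positivity)).mp h5
  have hEbound : (c * ρ ^ (-(N:ℝ)/2))^2 ≤ 2 * Real.pi * (cv/2 * ρ ^ (-mr))^2 := by
    set S := Real.sqrt (2/Real.pi) with hSdef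
    have hS2 : S^2 = 2/Real.pi := Real.sq_sqrt (by positivity)
    have hS0 : 0 < S := Real.sqrt_pos.mpr (by positivity)
    set Q := (ρ:ℝ) ^ d with hQdef
    have hQ0 : (0:ℝ) < Q := by positivity
    have hXd' : S * c ≤ Q * cv := by
      have := (div_le_iff₀ hcv).mp hXd
      linarith
    have key : c^2 ≤ Real.pi/2 * cv^2 * Q^2 := by
      have h3 : (S*c)*(S*c) ≤ (Q*cv)*(Q*cv) :=
        mul_self_le_mul_self (by positivity) hXd'
      have hS2' : S^2 * Real.pi = 2 := by
        rw [hS2]; field_simp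
      nlinarith [h3, hS2', hπ, sq_nonneg c, sq_nonneg (Q*cv)]
    have hNK : -(N:ℝ)/2 = -mr + -(d:ℝ) := by rw [hmrK, hKR]; ring
    rw [hNK, Real.rpow_add hρ0, Real.rpow_neg (le_of_lt hρ0) ((d:ℝ)), Real.rpow_natCast]
    have hP0 : (0:ℝ) < ρ ^ (-mr) := Real.rpow_pos_of_pos hρ0 _
    rw [show (c * (ρ ^ (-mr) * (Q)⁻¹))^2 = c^2 * (ρ^(-mr))^2 / Q^2 by field_simp,
      div_le_iff₀ (by positivity)]
    nlinarith [mul_le_mul_of_nonneg_right key (sq_nonneg (ρ^(-mr)))]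
  have hu : ‖u‖ ≤ cv/2 * ρ ^ (-mr) := by
    have h1 : ‖u‖^2 ≤ (cv/2 * ρ ^ (-mr))^2 := by nlinarith
    have h2 : (0:ℝ) ≤ cv/2 * ρ ^ (-mr) := by positivity
    nlinarith [norm_nonneg u]
  -- step 2: lower bound on ‖a m‖
  have hK0 : 0 < K := by omega
  have hN0 : (0:ℝ) < N := by
    rw [hKR]
    have : (0:ℝ) < K := by exact_mod_cast hK0
    linarith
  have hmr0 : (0:ℝ) < mr := lt_of_lt_of_le one_pos hmr1
  have hP0 : (0:ℝ) < ρ ^ (-mr) := Real.rpow_pos_of_pos hρ0 _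
  have hQr0 : (0:ℝ) < R ^ (-mr) := Real.rpow_pos_of_pos hR0 _
  have ham : cv * Real.pi * mr / ((N:ℝ) * Cs) * (R/ρ) ^ mr ≤ ‖a m‖ := by
    have hm0 : m ≠ 0 := by omega
    have habs : |m| = m := abs_of_pos (by omega)
    have hs := hsu m hm0
    rw [habs] at hs
    have hz : (R:ℝ) ^ (-m) = R ^ (-mr) := by
      rw [← Real.rpow_intCast R (-m), hmrdef]; push_cast; ring_nf
    rw [hz] at hs
    have habsr : |(m:ℝ)| = mr := by
      rw [hmrdef, abs_of_pos]; exact_mod_cast (by omega : (0:ℤ) < m)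
    rw [habsr] at hs
    have hv' : cv * ρ ^ (-mr) ≤ ‖v m‖ := by
      have := hv m
      rw [habs] at this
      have hz2 : (ρ:ℝ) ^ (-m) = ρ ^ (-mr) := by
        rw [← Real.rpow_intCast ρ (-m), hmrdef]; push_cast; ring_nf
      rwa [hz2] at this
    have hnormc : ‖((N : ℂ) / (2 * (Real.pi : ℂ)))‖ = (N:ℝ)/(2*Real.pi) := by
      rw [norm_div]
      norm_num [Complex.norm_real, abs_of_pos hπ]
    have htri : ‖v m‖ ≤ ‖((N : ℂ) / (2 * (Real.pi : ℂ))) * s m * a (winRep N m)‖ + ‖u‖ := by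
      have hvm : v m = ((N : ℂ) / (2 * (Real.pi : ℂ))) * s m * a (winRep N m) - u := by
        rw [hudef]; ring
      rw [hvm]
      exact norm_sub_le _ _
    have h2 : ‖((N : ℂ) / (2 * (Real.pi : ℂ))) * s m * a (winRep N m)‖
        = (N:ℝ)/(2*Real.pi) * ‖s m‖ * ‖a m‖ := by
      rw [hwr, norm_mul, norm_mul, hnormc]
    have h3 : ‖s m‖ * ‖a m‖ ≤ (Cs/mr * R ^ (-mr)) * ‖a m‖ :=
      mul_le_mul_of_nonneg_right hs (norm_nonneg _)
    have hcoefpos : (0:ℝ) < (N:ℝ)/(2*Real.pi) * (Cs/mr * R ^ (-mr)) := by positivity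
    have hstep1 : cv/2 * ρ ^ (-mr) ≤ (N:ℝ)/(2*Real.pi) * (Cs/mr * R ^ (-mr)) * ‖a m‖ := by
      have h1 : cv * ρ ^ (-mr) ≤ (N:ℝ)/(2*Real.pi) * ‖s m‖ * ‖a m‖ + ‖u‖ := by
        rw [← h2]; exact le_trans hv' htri
      have h4 := mul_le_mul_of_nonneg_left h3 (by positivity : (0:ℝ) ≤ (N:ℝ)/(2*Real.pi))
      nlinarith [h1, h4, hu]
    have hRρ : (R/ρ)^mr = ρ ^ (-mr) / R ^ (-mr) := by
      rw [Real.rpow_neg (le_of_lt hρ0), Real.rpow_neg (le_of_lt hR0),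
        Real.div_rpow (le_of_lt hR0) (le_of_lt hρ0)]
      field_simp
    have hπne : Real.pi ≠ 0 := ne_of_gt hπ
    have heq : cv * Real.pi * mr / ((N:ℝ) * Cs) * (ρ ^ (-mr) / R ^ (-mr))
        = (cv/2 * ρ ^ (-mr)) / ((N:ℝ)/(2*Real.pi) * (Cs/mr * R ^ (-mr))) := by
      field_simp
    rw [hRρ, heq, div_le_iff₀ hcoefpos]
    linarith [hstep1]
  -- step 3: conclude
  have hfin : cv * Real.pi / (Cs * (2*((d:ℝ)+1))) * (ρ/R)^d * (R / ρ) ^ ((N : ℝ) / 2)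
      ≤ cv * Real.pi * mr / ((N:ℝ) * Cs) * (R/ρ) ^ mr := by
    have hRρ1 : (0:ℝ) < R/ρ := by positivity
    have h1 : (R/ρ) ^ ((N:ℝ)/2) = (R/ρ)^mr * (R/ρ)^d := by
      rw [← Real.rpow_natCast (R/ρ) d, ← Real.rpow_add hRρ1]
      congr 1
      have : mr = (K:ℝ) - d := hmrK
      rw [hKR]; rw [this]; ring
    rw [h1]
    have h2 : (ρ/R)^d * (R/ρ)^d = 1 := by
      have h3 : (ρ/R) * (R/ρ) = 1 := by
        field_simp
      rw [← mul_pow, h3, one_pow]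
    have hkey : (N:ℝ) ≤ 2*((d:ℝ)+1) * mr := by
      rw [hKR, hmrK]
      have hKdr : (d:ℝ) + 1 ≤ (K:ℝ) := by exact_mod_cast hKd
      have hd1r : (1:ℝ) ≤ d := by exact_mod_cast hd1
      nlinarith
    calc cv * Real.pi / (Cs * (2*((d:ℝ)+1))) * (ρ/R)^d * ((R/ρ)^mr * (R/ρ)^d)
        = cv * Real.pi / (Cs * (2*((d:ℝ)+1))) * (R/ρ)^mr * ((ρ/R)^d * (R/ρ)^d) := by ring
      _ = cv * Real.pi / (Cs * (2*((d:ℝ)+1))) * (R/ρ)^mr := by rw [h2, mul_one]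
      _ ≤ cv * Real.pi * mr / ((N:ℝ)*Cs) * (R/ρ)^mr := by
          apply mul_le_mul_of_nonneg_right _ (by positivity)
          rw [div_le_div_iff₀ (by positivity) (by positivity)]
          nlinarith [mul_le_mul_of_nonneg_left hkey (by positivity : (0:ℝ) ≤ cv*Real.pi*Cs), hkey]
  have hcoef : ‖a m‖ ≤ coefNorm N a := by
    rw [coefNorm]
    have h1 : ‖a m‖^2 ≤ ∑ k ∈ window N, ‖a k‖ ^ 2 :=
      Finset.single_le_sum (f := fun k => ‖a k‖^2) (fun k _ => by positivity) hmwin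
    calc ‖a m‖ = Real.sqrt (‖a m‖^2) := (Real.sqrt_sq (norm_nonneg _)).symm
      _ ≤ _ := Real.sqrt_le_sqrt h1
  linarith
end
end
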